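/- Let T > 0 and let θ : ℝ → ℝ be continuously differentiable with sup|θ| and sup|θ'| finite. Define V₀ₖ(t,x) = e^{-k² t} ( θ(x) cos(kx) - 2 k t θ'(x) sin(kx) ). Then for every integer k ≥ 1, ∫₀ᵀ ‖V₀ₖ(t,·)‖_{L²(0,π)} dt ≤ √π ( sup|θ| + 2 sup|θ'| ) / k². -/

import Mathlib

open Real MeasureTheory intervalIntegral

/-- First source-term estimate: with
`V₀ₖ(t,x) = e^{-k²t}(θ(x)cos(kx) - 2kt θ'(x) sin(kx))` one has
`∫₀ᵀ ‖V₀ₖ(t,·)‖_{L²(0,π)} dt ≤ √π (sup|θ| + 2 sup|θ'|)/k²`. -/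
theorem stmt_2 (T : ℝ) (hT : 0 < T) (θ : ℝ → ℝ) (hθ : ContDiff ℝ 1 θ)
    (A B : ℝ) (hA : ∀ x : ℝ, |θ x| ≤ A) (hB : ∀ x : ℝ, |deriv θ x| ≤ B)
    (V : ℕ → ℝ → ℝ → ℝ)
    (hV : ∀ (k : ℕ) (t x : ℝ), V k t x =
      Real.exp (-(k : ℝ) ^ 2 * t) *
        (θ x * Real.cos (k * x) - 2 * (k : ℝ) * t * deriv θ x * Real.sin (k * x)))
    (k : ℕ) (hk : 1 ≤ k) :
    ∫ t in (0 : ℝ)..T, Real.sqrt (∫ x in (0 : ℝ)..π, (V k t x) ^ 2)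
      ≤ Real.sqrt π * (A + 2 * B) / (k : ℝ) ^ 2 := by
  have hA0 : 0 ≤ A := le_trans (abs_nonneg _) (hA 0)
  have hB0 : 0 ≤ B := le_trans (abs_nonneg _) (hB 0)
  have hk1 : (1 : ℝ) ≤ (k : ℝ) := by exact_mod_cast hk
  set c : ℝ := (k : ℝ) ^ 2 with hcdef
  have hc : 0 < c := by nlinarith
  have hcne : c ≠ 0 := ne_of_gt hc
  set g : ℝ → ℝ := fun t => Real.sqrt π * (Real.exp (-c * t) * (A + 2 * B * k * t)) with hgdef
  have hθc : Continuous θ := hθ.continuous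
  have hθ'c : Continuous (deriv θ) := (hθ.iterate_deriv' 0 1).continuous
  -- pointwise-in-t bound
  have hbound : ∀ t ∈ Set.Icc (0 : ℝ) T,
      Real.sqrt (∫ x in (0 : ℝ)..π, (V k t x) ^ 2) ≤ g t := by
    intro t ht
    obtain ⟨ht0, htT⟩ := ht
    set M : ℝ := Real.exp (-c * t) * (A + 2 * B * k * t) with hMdef
    have hM0 : 0 ≤ M := by positivity
    have hVcont : Continuous (fun x => V k t x) := by
      have : (fun x => V k t x) = fun x =>
          Real.exp (-c * t) * (θ x * Real.cos (k * x)
            - 2 * (k : ℝ) * t * deriv θ x * Real.sin (k * x)) := by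
        funext x; rw [hV]
      rw [this]
      exact continuous_const.mul (((hθc.mul ((Real.continuous_cos).comp (continuous_const.mul continuous_id)))).sub (((continuous_const.mul hθ'c)).mul ((Real.continuous_sin).comp (continuous_const.mul continuous_id))))
    have hptw : ∀ x ∈ Set.Icc (0 : ℝ) π, (V k t x) ^ 2 ≤ M ^ 2 := by
      intro x _
      have habs : |V k t x| ≤ M := by
        rw [hV]
        rw [abs_mul, Real.abs_exp]
        apply mul_le_mul_of_nonneg_left _ (Real.exp_pos _).le
        have h1 : |θ x * Real.cos (k * x)| ≤ A := by
          rw [abs_mul]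
          calc |θ x| * |Real.cos (k * x)| ≤ A * 1 :=
                mul_le_mul (hA x) (Real.abs_cos_le_one _) (abs_nonneg _) hA0
            _ = A := mul_one A
        have h2 : |2 * (k : ℝ) * t * deriv θ x * Real.sin (k * x)| ≤ 2 * B * k * t := by
          rw [abs_mul, abs_mul]
          have hkt : |2 * (k : ℝ) * t| = 2 * k * t := by
            rw [abs_of_nonneg]; positivity
          rw [hkt]
          calc 2 * (k : ℝ) * t * |deriv θ x| * |Real.sin (k * x)|
              ≤ 2 * (k : ℝ) * t * B * 1 := by
                apply mul_le_mul _ (Real.abs_sin_le_one _) (abs_nonneg _) (by positivity)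
                exact mul_le_mul_of_nonneg_left (hB x) (by positivity)
            _ = 2 * B * k * t := by ring
        calc |θ x * Real.cos (k * x) - 2 * (k : ℝ) * t * deriv θ x * Real.sin (k * x)|
            ≤ |θ x * Real.cos (k * x)| + |2 * (k : ℝ) * t * deriv θ x * Real.sin (k * x)| :=
              abs_sub _ _
          _ ≤ A + 2 * B * k * t := add_le_add h1 h2
      calc (V k t x) ^ 2 = |V k t x| ^ 2 := (sq_abs _).symm
        _ ≤ M ^ 2 := pow_le_pow_left₀ (abs_nonneg _) habs 2
    have hint : (∫ x in (0 : ℝ)..π, (V k t x) ^ 2) ≤ ∫ x in (0 : ℝ)..π, M ^ 2 := by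
      apply intervalIntegral.integral_mono_on Real.pi_pos.le
        ((hVcont.pow 2).intervalIntegrable _ _) (intervalIntegrable_const) hptw
    have hconst : (∫ x in (0 : ℝ)..π, M ^ 2) = π * M ^ 2 := by
      simp [intervalIntegral.integral_const, smul_eq_mul]
    calc Real.sqrt (∫ x in (0 : ℝ)..π, (V k t x) ^ 2)
        ≤ Real.sqrt (π * M ^ 2) := Real.sqrt_le_sqrt (by rw [← hconst]; exact hint)
      _ = Real.sqrt π * M := by
          rw [Real.sqrt_mul Real.pi_pos.le, Real.sqrt_sq hM0]
      _ = g t := rfl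
  have hgcont : Continuous g := continuous_const.mul (((Real.continuous_exp).comp (continuous_const.mul continuous_id)).mul (continuous_const.add (continuous_const.mul continuous_id)))
  have hgint : IntervalIntegrable g volume 0 T := hgcont.intervalIntegrable _ _
  have hgnn : ∀ t ∈ Set.Icc (0 : ℝ) T, 0 ≤ g t := by
    intro t ht
    have := ht.1
    positivity
  have h1 : (∫ t in (0 : ℝ)..T, Real.sqrt (∫ x in (0 : ℝ)..π, (V k t x) ^ 2))
      ≤ ∫ t in (0 : ℝ)..T, g t := by
    by_cases hf : IntervalIntegrable
        (fun t => Real.sqrt (∫ x in (0 : ℝ)..π, (V k t x) ^ 2)) volume 0 T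
    · exact intervalIntegral.integral_mono_on hT.le hf hgint hbound
    · rw [intervalIntegral.integral_undef hf]
      exact intervalIntegral.integral_nonneg hT.le hgnn
  -- compute the integral of g via antiderivative
  set F : ℝ → ℝ := fun t =>
    Real.sqrt π * (-((A + 2 * B * k * t) / c + 2 * B * k / c ^ 2) * Real.exp (-c * t))
    with hFdef
  have hderiv : ∀ t ∈ Set.uIcc (0 : ℝ) T, HasDerivAt F (g t) t := by
    intro t _
    have he : HasDerivAt (fun t : ℝ => Real.exp (-c * t)) (Real.exp (-c * t) * (-c)) t := by
      simpa using ((hasDerivAt_id t).const_mul (-c)).exp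
    have hu : HasDerivAt (fun t : ℝ => -((A + 2 * B * k * t) / c + 2 * B * k / c ^ 2))
        (-(2 * B * k / c)) t := by
      have : HasDerivAt (fun t : ℝ => (A + 2 * B * k * t) / c + 2 * B * k / c ^ 2)
          (2 * B * k / c) t := by
        have h0 : HasDerivAt (fun t : ℝ => A + 2 * B * k * t) (2 * B * k) t := by
          simpa using ((hasDerivAt_id t).const_mul (2 * B * k)).const_add A
        simpa using (h0.div_const c).add_const (2 * B * k / c ^ 2)
      exact this.neg
    have := ((hu.mul he).const_mul (Real.sqrt π))
    refine this.congr_deriv ?_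
    rw [hgdef]
    field_simp
    ring
  have hcalc : (∫ t in (0 : ℝ)..T, g t) = F T - F 0 :=
    intervalIntegral.integral_eq_sub_of_hasDerivAt hderiv hgint
  have hFT : F T ≤ 0 := by
    rw [hFdef]
    have : 0 ≤ ((A + 2 * B * k * T) / c + 2 * B * k / c ^ 2) := by positivity
    simp only [neg_mul]
    apply mul_nonpos_of_nonneg_of_nonpos (Real.sqrt_nonneg _)
    exact neg_nonpos_of_nonneg (mul_nonneg this (Real.exp_pos _).le)
  have hF0 : F 0 = -(Real.sqrt π * (A / c + 2 * B * k / c ^ 2)) := by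
    rw [hFdef]; simp; ring
  have h2 : (∫ t in (0 : ℝ)..T, g t) ≤ Real.sqrt π * (A + 2 * B) / c := by
    rw [hcalc, hF0]
    have hkey : Real.sqrt π * (A / c + 2 * B * k / c ^ 2) ≤ Real.sqrt π * (A + 2 * B) / c := by
      have h3 : A / c + 2 * B * k / c ^ 2 ≤ (A + 2 * B) / c := by
        rw [div_add_div _ _ hcne (pow_ne_zero 2 hcne), div_le_div_iff₀ (by positivity) hc]
        have hkc : (k : ℝ) ≤ c := by rw [hcdef]; nlinarith
        nlinarith [mul_nonneg (mul_nonneg hB0 (sq_nonneg c)) (sub_nonneg.mpr hkc), sq_nonneg c, hc.le]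
      calc Real.sqrt π * (A / c + 2 * B * k / c ^ 2)
          ≤ Real.sqrt π * ((A + 2 * B) / c) :=
            mul_le_mul_of_nonneg_left h3 (Real.sqrt_nonneg _)
        _ = Real.sqrt π * (A + 2 * B) / c := (mul_div_assoc _ _ _).symm
    linarith
  linarith
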